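/- Let f_k(x,y) be homogeneous polynomials of degree k for k = 3,...,m. Then the map x₁(x,y) = (1, x, y, -Σ_{k=3}^m f_k(x,y), Σ_{k=3}^m (1/(k-2)) ∂f_k/∂x, Σ_{k=3}^m (1/(k-2)) ∂f_k/∂y) : ℂ² → ℂ⁶ is Legendrian: ω(x₁, ∂x₁/∂x) = 0 and ω(x₁, ∂x₁/∂y) = 0 for all (x,y), where ω((X,Y),(X',Y')) = Σᵢ(XᵢY'ᵢ - YᵢX'ᵢ). -/

import Mathlib

open MvPolynomial Finset

/-- Standard symplectic form `ω((X,Y),(X',Y')) = Σᵢ (XᵢY'ᵢ - YᵢX'ᵢ)` on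
`ℂ⁶` (indices `0,1,2` the `X`'s and `3,4,5` the `Y`'s). -/
noncomputable def omega (v w : Fin 6 → ℂ) : ℂ :=
  v 0 * w 3 - v 3 * w 0 + v 1 * w 4 - v 4 * w 1 + v 2 * w 5 - v 5 * w 2

/-- The generalized flat Legendrian parametrization
`x₁(x,y) = (1, x, y, -Σ f_k, Σ (1/(k-2)) ∂f_k/∂x, Σ (1/(k-2)) ∂f_k/∂y)`. -/
noncomputable def Xgen (m : ℕ) (f : ℕ → MvPolynomial (Fin 2) ℂ) :
    ℂ × ℂ → (Fin 6 → ℂ) := fun p =>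
  ![1, p.1, p.2,
    -(∑ k ∈ Finset.Icc 3 m, MvPolynomial.eval ![p.1, p.2] (f k)),
    ∑ k ∈ Finset.Icc 3 m,
      (1 / ((k : ℂ) - 2)) * MvPolynomial.eval ![p.1, p.2] (MvPolynomial.pderiv 0 (f k)),
    ∑ k ∈ Finset.Icc 3 m,
      (1 / ((k : ℂ) - 2)) * MvPolynomial.eval ![p.1, p.2] (MvPolynomial.pderiv 1 (f k))]

open ContinuousLinearMap

lemma X_mul_pderiv_monomial (i : Fin 2) (s : Fin 2 →₀ ℕ) (a : ℂ) :
    X i * pderiv i (monomial s a) = monomial s (a * s i) := by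
  rw [pderiv_monomial]
  by_cases h : s i = 0
  · simp [h]
  · rw [X, monomial_mul, one_mul, add_tsub_cancel_of_le]
    rwa [Finsupp.single_le_iff, Nat.one_le_iff_ne_zero]

lemma euler {n : ℕ} {q : MvPolynomial (Fin 2) ℂ} (hq : q.IsHomogeneous n) :
    X 0 * pderiv 0 q + X 1 * pderiv 1 q = C (n : ℂ) * q := by
  conv_lhs => rw [q.as_sum]
  conv_rhs => rw [q.as_sum]
  rw [map_sum, map_sum, Finset.mul_sum, Finset.mul_sum, Finset.mul_sum, ← Finset.sum_add_distrib]
  refine Finset.sum_congr rfl fun s hs => ?_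
  rw [X_mul_pderiv_monomial, X_mul_pderiv_monomial, C_mul_monomial, ← map_add, ← mul_add]
  congr 1
  have h1 : s.degree = n := by
    rw [Finsupp.degree_eq_weight_one]; exact hq (mem_support_iff.mp hs)
  have h2 : s.degree = s 0 + s 1 := by
    rw [Finsupp.degree_apply]
    rw [Finset.sum_subset (Finset.subset_univ _) (fun x _ hx => Finsupp.notMem_support_iff.mp hx)]
    simp [Fin.sum_univ_two]
  rw [← h1, h2]
  push_cast
  ring

lemma euler_eval {n : ℕ} {q : MvPolynomial (Fin 2) ℂ} (hq : q.IsHomogeneous n) (x y : ℂ) :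
    x * eval ![x, y] (pderiv 0 q) + y * eval ![x, y] (pderiv 1 q)
      = (n : ℂ) * eval ![x, y] q := by
  have := congrArg (eval ![x, y]) (euler hq)
  simpa using this

lemma euler_eval_d0 {n : ℕ} {q : MvPolynomial (Fin 2) ℂ} (hq : q.IsHomogeneous n) (x y : ℂ) :
    x * eval ![x, y] (pderiv 0 (pderiv 0 q)) + y * eval ![x, y] (pderiv 0 (pderiv 1 q))
      = ((n : ℂ) - 1) * eval ![x, y] (pderiv 0 q) := by
  have h := congrArg (eval ![x, y] ∘ pderiv (0 : Fin 2)) (euler hq)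
  simp only [Function.comp_apply, map_add, pderiv_mul, pderiv_X_self, pderiv_C,
    pderiv_X_of_ne (by decide : (0:Fin 2) ≠ 1), pderiv_X_of_ne (by decide : (1:Fin 2) ≠ 0),
    pderiv_C_mul] at h
  simp only [map_add, map_mul, eval_X, eval_C, one_mul, zero_mul, add_zero, zero_add] at h
  simp only [Matrix.cons_val_zero, Matrix.cons_val_one, Matrix.head_cons] at h
  linear_combination h

lemma euler_eval_d1 {n : ℕ} {q : MvPolynomial (Fin 2) ℂ} (hq : q.IsHomogeneous n) (x y : ℂ) :
    x * eval ![x, y] (pderiv 1 (pderiv 0 q)) + y * eval ![x, y] (pderiv 1 (pderiv 1 q))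
      = ((n : ℂ) - 1) * eval ![x, y] (pderiv 1 q) := by
  have h := congrArg (eval ![x, y] ∘ pderiv (1 : Fin 2)) (euler hq)
  simp only [Function.comp_apply, map_add, pderiv_mul, pderiv_X_self, pderiv_C,
    pderiv_X_of_ne (by decide : (1:Fin 2) ≠ 0), pderiv_X_of_ne (by decide : (0:Fin 2) ≠ 1),
    pderiv_C_mul] at h
  simp only [map_add, map_mul, eval_X, eval_C, one_mul, zero_mul, add_zero, zero_add] at h
  simp only [Matrix.cons_val_zero, Matrix.cons_val_one, Matrix.head_cons] at h
  linear_combination h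

noncomputable def Dq (q : MvPolynomial (Fin 2) ℂ) (p : ℂ × ℂ) : ℂ × ℂ →L[ℂ] ℂ :=
  eval ![p.1, p.2] (pderiv 0 q) • fst ℂ ℂ ℂ + eval ![p.1, p.2] (pderiv 1 q) • snd ℂ ℂ ℂ

lemma hasFDerivAt_eval (q : MvPolynomial (Fin 2) ℂ) (p : ℂ × ℂ) :
    HasFDerivAt (fun p : ℂ × ℂ => eval ![p.1, p.2] q) (Dq q p) p := by
  induction q using MvPolynomial.induction_on with
  | C a =>
      simp only [eval_C]
      convert hasFDerivAt_const a p
      simp only [Dq, map_zero, eval_C, pderiv_C]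
      module
  | add q r hq hr =>
      simp only [map_add]
      have hD : Dq (q + r) p = Dq q p + Dq r p := by
        simp only [Dq, map_add]
        module
      rw [hD]
      exact hq.fun_add hr
  | mul_X q i hq =>
      have h2 : i = 0 ∨ i = 1 := by fin_cases i; exacts [Or.inl rfl, Or.inr rfl]
      obtain rfl | rfl := h2
      · have key := hq.mul (hasFDerivAt_fst (p := p))
        have hD : (eval ![p.1, p.2]) q • fst ℂ ℂ ℂ + p.1 • Dq q p = Dq (q * X 0) p := by
          refine ContinuousLinearMap.ext fun v => ?_
          simp [Dq, pderiv_mul, pderiv_X_self, pderiv_X_of_ne (by decide : (0:Fin 2) ≠ 1),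
            smul_apply]
          ring
        have : HasFDerivAt (fun p : ℂ × ℂ => eval ![p.1, p.2] (q * X 0)) (Dq (q * X 0) p) p := by
          rw [← hD]
          refine key.congr_of_eventuallyEq (Filter.Eventually.of_forall fun y => ?_)
          simp
        exact this
      · have key := hq.mul (hasFDerivAt_snd (p := p))
        have hD : (eval ![p.1, p.2]) q • snd ℂ ℂ ℂ + p.2 • Dq q p = Dq (q * X 1) p := by
          refine ContinuousLinearMap.ext fun v => ?_
          simp [Dq, pderiv_mul, pderiv_X_self, pderiv_X_of_ne (by decide : (1:Fin 2) ≠ 0),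
            smul_apply]
          ring
        have : HasFDerivAt (fun p : ℂ × ℂ => eval ![p.1, p.2] (q * X 1)) (Dq (q * X 1) p) p := by
          rw [← hD]
          refine key.congr_of_eventuallyEq (Filter.Eventually.of_forall fun y => ?_)
          simp
        exact this

noncomputable def DXgen (m : ℕ) (f : ℕ → MvPolynomial (Fin 2) ℂ) (p : ℂ × ℂ) :
    ℂ × ℂ →L[ℂ] (Fin 6 → ℂ) :=
  ContinuousLinearMap.pi ![0, fst ℂ ℂ ℂ, snd ℂ ℂ ℂ,
    -(∑ k ∈ Finset.Icc 3 m, Dq (f k) p),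
    ∑ k ∈ Finset.Icc 3 m, (1 / ((k : ℂ) - 2)) • Dq (pderiv 0 (f k)) p,
    ∑ k ∈ Finset.Icc 3 m, (1 / ((k : ℂ) - 2)) • Dq (pderiv 1 (f k)) p]

lemma hasFDerivAt_Xgen (m : ℕ) (f : ℕ → MvPolynomial (Fin 2) ℂ) (p : ℂ × ℂ) :
    HasFDerivAt (Xgen m f) (DXgen m f p) p := by
  apply hasFDerivAt_pi''
  intro i
  rw [DXgen, ContinuousLinearMap.proj_pi]
  fin_cases i
  · exact hasFDerivAt_const 1 p
  · exact hasFDerivAt_fst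
  · exact hasFDerivAt_snd
  · simpa [Xgen] using (HasFDerivAt.fun_sum fun k (_ : k ∈ Finset.Icc 3 m) =>
      hasFDerivAt_eval (f k) p).fun_neg
  · simpa [Xgen] using HasFDerivAt.fun_sum fun k (_ : k ∈ Finset.Icc 3 m) =>
      (hasFDerivAt_eval (pderiv 0 (f k)) p).const_mul (1 / ((k : ℂ) - 2))
  · simpa [Xgen] using HasFDerivAt.fun_sum fun k (_ : k ∈ Finset.Icc 3 m) =>
      (hasFDerivAt_eval (pderiv 1 (f k)) p).const_mul (1 / ((k : ℂ) - 2))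

lemma cons_val_five {α : Type*} (a b c d e g : α) :
    ![a, b, c, d, e, g] (5 : Fin 6) = g := rfl

/-- If `f_k` is homogeneous of degree `k` for `k = 3, ..., m`, the generalized flat
map `Xgen m f` is Legendrian: `ω(x₁, ∂x₁/∂x) = 0` and `ω(x₁, ∂x₁/∂y) = 0`. -/
theorem generalized_flat_legendrian (m : ℕ) (f : ℕ → MvPolynomial (Fin 2) ℂ)
    (hf : ∀ k ∈ Finset.Icc 3 m, (f k).IsHomogeneous k) (p : ℂ × ℂ) :
    omega (Xgen m f p) (fderiv ℂ (Xgen m f) p (1, 0)) = 0 ∧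
      omega (Xgen m f p) (fderiv ℂ (Xgen m f) p (0, 1)) = 0 := by
  rw [(hasFDerivAt_Xgen m f p).fderiv]
  have hterm : ∀ k ∈ Finset.Icc 3 m, ((k : ℂ) - 2) ≠ 0 := by
    intro k hk
    obtain ⟨hk3, -⟩ := Finset.mem_Icc.mp hk
    refine sub_ne_zero.mpr ?_
    exact_mod_cast (by omega : k ≠ 2)
  constructor
  · simp only [omega, Xgen, DXgen, Dq, ContinuousLinearMap.pi_apply,
      ContinuousLinearMap.sum_apply, ContinuousLinearMap.add_apply,
      ContinuousLinearMap.neg_apply, ContinuousLinearMap.smul_apply,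
      ContinuousLinearMap.coe_fst', ContinuousLinearMap.coe_snd',
      ContinuousLinearMap.zero_apply, Matrix.cons_val_zero, Matrix.cons_val_one,
      Matrix.head_cons, Matrix.cons_val_two, Matrix.tail_cons, Matrix.cons_val_three,
      Matrix.cons_val_four, cons_val_five, smul_eq_mul, mul_one, mul_zero, one_mul,
      zero_mul, add_zero, zero_add, neg_zero, sub_zero, one_div]
    have key : ∑ k ∈ Finset.Icc 3 m,
        (-(MvPolynomial.eval ![p.1, p.2] (pderiv 0 (f k)))
          + p.1 * (((k : ℂ) - 2)⁻¹ *
              MvPolynomial.eval ![p.1, p.2] (pderiv 0 (pderiv 0 (f k))))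
          - ((k : ℂ) - 2)⁻¹ * MvPolynomial.eval ![p.1, p.2] (pderiv 0 (f k))
          + p.2 * (((k : ℂ) - 2)⁻¹ *
              MvPolynomial.eval ![p.1, p.2] (pderiv 0 (pderiv 1 (f k))))) = 0 := by
      refine Finset.sum_eq_zero fun k hk => ?_
      have he := euler_eval_d0 (hf k hk) p.1 p.2
      have hk2 := hterm k hk
      field_simp
      linear_combination he
    simp only [Finset.sum_add_distrib, Finset.sum_sub_distrib, Finset.sum_neg_distrib] at key
    simp only [Finset.mul_sum]
    linear_combination key
  · simp only [omega, Xgen, DXgen, Dq, ContinuousLinearMap.pi_apply,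
      ContinuousLinearMap.sum_apply, ContinuousLinearMap.add_apply,
      ContinuousLinearMap.neg_apply, ContinuousLinearMap.smul_apply,
      ContinuousLinearMap.coe_fst', ContinuousLinearMap.coe_snd',
      ContinuousLinearMap.zero_apply, Matrix.cons_val_zero, Matrix.cons_val_one,
      Matrix.head_cons, Matrix.cons_val_two, Matrix.tail_cons, Matrix.cons_val_three,
      Matrix.cons_val_four, cons_val_five, smul_eq_mul, mul_one, mul_zero, one_mul,
      zero_mul, add_zero, zero_add, neg_zero, sub_zero, one_div]
    have key : ∑ k ∈ Finset.Icc 3 m,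
        (-(MvPolynomial.eval ![p.1, p.2] (pderiv 1 (f k)))
          + p.1 * (((k : ℂ) - 2)⁻¹ *
              MvPolynomial.eval ![p.1, p.2] (pderiv 1 (pderiv 0 (f k))))
          + p.2 * (((k : ℂ) - 2)⁻¹ *
              MvPolynomial.eval ![p.1, p.2] (pderiv 1 (pderiv 1 (f k))))
          - ((k : ℂ) - 2)⁻¹ * MvPolynomial.eval ![p.1, p.2] (pderiv 1 (f k))) = 0 := by
      refine Finset.sum_eq_zero fun k hk => ?_
      have he := euler_eval_d1 (hf k hk) p.1 p.2
      have hk2 := hterm k hk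
      field_simp
      linear_combination he
    simp only [Finset.sum_add_distrib, Finset.sum_sub_distrib, Finset.sum_neg_distrib] at key
    simp only [Finset.mul_sum]
    linear_combination key
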